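/- For every n-th level continued fraction cylinder [a_1,…,a_n] ⊆ (0,1), the ?-image ?([a_1,…,a_n]) is a dyadic interval of length 2^{-(a_1+⋯+a_n)}. -/

import Mathlib

open MeasureTheory Set

/-- The Gauss map `x ↦ 1/x mod 1` (with `0 ↦ 0`). -/
noncomputable def gaussMap (x : ℝ) : ℝ := if x = 0 then 0 else Int.fract x⁻¹

/-- The `(k+1)`-st continued fraction partial quotient `a_{k+1}(x)`. -/
noncomputable def cfDigit (k : ℕ) (x : ℝ) : ℕ := ⌊(gaussMap^[k] x)⁻¹⌋₊

/-- `cfSum n x = a_1(x) + ⋯ + a_n(x)`. -/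
noncomputable def cfSum (n : ℕ) (x : ℝ) : ℕ := ∑ i ∈ Finset.range n, cfDigit i x

/-- Minkowski's question mark function, defined by Salem's series
`?(x) = Σ_{k≥1} (-1)^{k-1} 2^{1-(a_1+⋯+a_k)}`, which is a finite sum for rational `x`
(the terms are cut off once the Gauss-map orbit reaches `0`). -/
noncomputable def mink (x : ℝ) : ℝ :=
  ∑' k : ℕ, if gaussMap^[k] x = 0 then 0 else
    (-1 : ℝ) ^ k * (2 : ℝ) ^ ((1 : ℤ) - (cfSum (k + 1) x : ℤ))

/-! Basic facts -/

noncomputable def term (x : ℝ) (k : ℕ) : ℝ :=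
  if gaussMap^[k] x = 0 then 0 else (-1 : ℝ) ^ k * (2 : ℝ) ^ ((1 : ℤ) - (cfSum (k + 1) x : ℤ))

noncomputable def gterm (x : ℝ) (k : ℕ) : ℝ :=
  if gaussMap^[k] x = 0 then 0 else (2 : ℝ) ^ ((1 : ℤ) - (cfSum (k + 1) x : ℤ))

lemma mink_eq_tsum (x : ℝ) : mink x = ∑' k, term x k := rfl

lemma term_eq (x : ℝ) (k : ℕ) : term x k = (-1 : ℝ) ^ k * gterm x k := by
  unfold term gterm; split <;> simp

lemma gaussMap_zero : gaussMap 0 = 0 := by simp [gaussMap]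

lemma gaussMap_mem (x : ℝ) : gaussMap x ∈ Ico (0:ℝ) 1 := by
  unfold gaussMap
  split
  · exact ⟨le_refl 0, one_pos⟩
  · exact ⟨Int.fract_nonneg _, Int.fract_lt_one _⟩

lemma orbit_mem {x : ℝ} (hx : x ∈ Icc (0:ℝ) 1) (k : ℕ) : gaussMap^[k] x ∈ Icc (0:ℝ) 1 := by
  cases k with
  | zero => simpa using hx
  | succ n =>
    rw [Function.iterate_succ_apply']
    exact Ico_subset_Icc_self (gaussMap_mem _)

lemma orbit_ne_zero {x : ℝ} {k : ℕ} (h : gaussMap^[k+1] x ≠ 0) : gaussMap^[k] x ≠ 0 := by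
  intro h0
  apply h
  rw [Function.iterate_succ_apply', h0, gaussMap_zero]

lemma cfDigit_pos {x : ℝ} (hx : x ∈ Icc (0:ℝ) 1) {k : ℕ} (h : gaussMap^[k] x ≠ 0) :
    1 ≤ cfDigit k x := by
  have hm := orbit_mem hx k
  have hpos : 0 < gaussMap^[k] x := lt_of_le_of_ne hm.1 (Ne.symm h)
  have h1 : (1:ℝ) ≤ (gaussMap^[k] x)⁻¹ := one_le_inv_iff₀.mpr ⟨hpos, hm.2⟩
  exact Nat.le_floor (by exact_mod_cast h1)

lemma gterm_nonneg (x : ℝ) (k : ℕ) : 0 ≤ gterm x k := by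
  unfold gterm; split
  · exact le_refl 0
  · positivity

lemma gterm_zero_le_one {x : ℝ} (hx : x ∈ Icc (0:ℝ) 1) : gterm x 0 ≤ 1 := by
  unfold gterm; split
  · exact zero_le_one
  · rename_i h
    have h1 : 1 ≤ cfSum 1 x := by
      have := cfDigit_pos hx (k := 0) (by simpa using h)
      simpa [cfSum] using this
    calc (2:ℝ) ^ ((1:ℤ) - (cfSum 1 x : ℤ)) ≤ 2 ^ (0:ℤ) := by
          apply zpow_le_zpow_right₀ one_le_two; omega
      _ = 1 := by norm_num

lemma gterm_succ_le {x : ℝ} (k : ℕ) : gterm x (k+1) ≤ gterm x k / 2 := by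
  unfold gterm
  by_cases h : gaussMap^[k+1] x = 0
  · rw [if_pos h]
    split
    · norm_num
    · positivity
  · rw [if_neg h, if_neg (orbit_ne_zero h)]
    have hd : 1 ≤ cfDigit (k+1) x := by
      have hm : gaussMap^[k+1] x ∈ Icc (0:ℝ) 1 := by
        rw [Function.iterate_succ_apply']
        exact Ico_subset_Icc_self (gaussMap_mem _)
      have hpos : 0 < gaussMap^[k+1] x := lt_of_le_of_ne hm.1 (Ne.symm h)
      have h1 : (1:ℝ) ≤ (gaussMap^[k+1] x)⁻¹ := one_le_inv_iff₀.mpr ⟨hpos, hm.2⟩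
      exact Nat.le_floor (by exact_mod_cast h1)
    have hs : cfSum (k+1) x + 1 ≤ cfSum (k+2) x := by
      have : cfSum (k+2) x = cfSum (k+1) x + cfDigit (k+1) x := by
        simp [cfSum, Finset.sum_range_succ]
      omega
    calc (2:ℝ) ^ ((1:ℤ) - (cfSum (k+2) x : ℤ)) ≤ 2 ^ ((1:ℤ) - (cfSum (k+1) x : ℤ) - 1) := by
          apply zpow_le_zpow_right₀ one_le_two; push_cast; omega
      _ = 2 ^ ((1:ℤ) - (cfSum (k+1) x : ℤ)) / 2 := by
          rw [zpow_sub₀ (two_ne_zero)]; norm_num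

lemma gterm_le_pow {x : ℝ} (hx : x ∈ Icc (0:ℝ) 1) (k : ℕ) : gterm x k ≤ (1/2) ^ k := by
  induction k with
  | zero => simpa using gterm_zero_le_one hx
  | succ n ih =>
    calc gterm x (n+1) ≤ gterm x n / 2 := gterm_succ_le n
      _ ≤ (1/2)^n / 2 := by linarith
      _ = (1/2)^(n+1) := by ring

lemma summable_term {x : ℝ} (hx : x ∈ Icc (0:ℝ) 1) : Summable (term x) := by
  apply Summable.of_abs
  apply Summable.of_nonneg_of_le (fun k => abs_nonneg _) (fun k => ?_)
    (summable_geometric_of_lt_one (by norm_num) (by norm_num) : Summable fun k:ℕ => (1/2:ℝ)^k)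
  rw [term_eq, abs_mul, abs_pow, abs_neg, abs_one, one_pow, one_mul,
    abs_of_nonneg (gterm_nonneg x k)]
  exact gterm_le_pow hx k

lemma summable_gterm {x : ℝ} (hx : x ∈ Icc (0:ℝ) 1) : Summable (gterm x) :=
  Summable.of_nonneg_of_le (gterm_nonneg x) (gterm_le_pow hx)
    (summable_geometric_of_lt_one (by norm_num) (by norm_num))

lemma mink_zero : mink 0 = 0 := by
  rw [mink_eq_tsum]
  convert tsum_zero with k
  unfold term
  rw [if_pos]
  exact Function.iterate_fixed gaussMap_zero k

lemma orbit_eventually_zero {x : ℝ} (h : gaussMap x = 0) (k : ℕ) : gaussMap^[k+1] x = 0 := by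
  rw [Function.iterate_succ_apply, h]
  exact Function.iterate_fixed gaussMap_zero k

/-- If the Gauss orbit dies at step 1, `mink x` is a single term. -/
lemma mink_of_gauss_zero {x : ℝ} (hx : x ≠ 0) (h : gaussMap x = 0) :
    mink x = 2 ^ ((1:ℤ) - (cfDigit 0 x : ℤ)) := by
  rw [mink_eq_tsum]
  rw [tsum_eq_single 0 (fun k hk => ?_)]
  · unfold term
    rw [if_neg (by simpa using hx)]
    simp [cfSum]
  · unfold term
    obtain ⟨m, rfl⟩ := Nat.exists_eq_succ_of_ne_zero hk
    rw [if_pos (orbit_eventually_zero h m)]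

lemma mink_one : mink 1 = 1 := by
  have h : gaussMap 1 = 0 := by simp [gaussMap]
  rw [mink_of_gauss_zero one_ne_zero h]
  have : cfDigit 0 1 = 1 := by simp [cfDigit]
  rw [this]
  norm_num

lemma inv_nat_add_mem {a : ℕ} (ha : 1 ≤ a) {y : ℝ} (hy : y ∈ Icc (0:ℝ) 1) :
    ((a:ℝ) + y)⁻¹ ∈ Icc (0:ℝ) 1 := by
  have h1 : (1:ℝ) ≤ (a:ℝ) + y := by
    have : (1:ℝ) ≤ (a:ℝ) := by exact_mod_cast ha
    linarith [hy.1]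
  constructor
  · positivity
  · rw [inv_le_one_iff₀]; right; exact h1

/-- Key recursion: `?(1/(a+y)) = 2^{1-a} - 2^{-a} ?(y)` for `a ≥ 1`, `y ∈ [0,1]`. -/
lemma mink_rec {a : ℕ} (ha : 1 ≤ a) {y : ℝ} (hy : y ∈ Icc (0:ℝ) 1) :
    mink (((a:ℝ) + y)⁻¹) = 2 ^ ((1:ℤ) - (a:ℤ)) - 2 ^ (-(a:ℤ)) * mink y := by
  have ha1 : (1:ℝ) ≤ (a:ℝ) := by exact_mod_cast ha
  have hay : (0:ℝ) < (a:ℝ) + y := by linarith [hy.1]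
  set x : ℝ := ((a:ℝ) + y)⁻¹ with hxdef
  have hxne : x ≠ 0 := by positivity
  have hxinv : x⁻¹ = (a:ℝ) + y := by rw [hxdef, inv_inv]
  rcases eq_or_lt_of_le hy.1 with h0 | hypos
  · -- y = 0
    rw [← h0, mink_zero, mul_zero, sub_zero]
    have hg : gaussMap x = 0 := by
      unfold gaussMap
      rw [if_neg hxne, hxinv, ← h0, add_zero, Int.fract_natCast]
    rw [mink_of_gauss_zero hxne hg]
    congr 2
    have : cfDigit 0 x = a := by
      unfold cfDigit
      simp only [Function.iterate_zero, id_eq]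
      rw [hxinv, ← h0, add_zero, Nat.floor_natCast]
    rw [this]
  rcases eq_or_lt_of_le hy.2 with h1 | hylt
  · -- y = 1
    have hg : gaussMap x = 0 := by
      unfold gaussMap
      rw [if_neg hxne, hxinv, h1]
      have : (a:ℝ) + 1 = ((a+1 : ℕ) : ℝ) := by push_cast; ring
      rw [this, Int.fract_natCast]
    rw [mink_of_gauss_zero hxne hg]
    have hd : cfDigit 0 x = a + 1 := by
      unfold cfDigit
      simp only [Function.iterate_zero, id_eq]
      rw [hxinv, h1]
      have : (a:ℝ) + 1 = ((a+1 : ℕ) : ℝ) := by push_cast; ring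
      rw [this, Nat.floor_natCast]
    rw [hd, h1, mink_one, mul_one]
    rw [show ((1:ℤ) - ((a+1:ℕ):ℤ)) = -(a:ℤ) by push_cast; ring]
    rw [zpow_sub₀ (two_ne_zero), zpow_neg]
    norm_num
    ring
  -- 0 < y < 1
  have hyIco : y ∈ Ico (0:ℝ) 1 := ⟨hy.1, hylt⟩
  have hg : gaussMap x = y := by
    unfold gaussMap
    rw [if_neg hxne, hxinv]
    have : (a:ℝ) = ((a:ℤ):ℝ) := by push_cast; ring
    rw [this, add_comm, Int.fract_add_intCast, Int.fract_eq_self.mpr ⟨hy.1, hylt⟩]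
  have horb : ∀ k, gaussMap^[k+1] x = gaussMap^[k] y := by
    intro k; rw [Function.iterate_succ_apply, hg]
  have hd0 : cfDigit 0 x = a := by
    unfold cfDigit
    simp only [Function.iterate_zero, id_eq]
    rw [hxinv]
    rw [Nat.floor_eq_iff (by positivity)]
    constructor
    · push_cast; linarith
    · push_cast; linarith
  have hdsucc : ∀ k, cfDigit (k+1) x = cfDigit k y := by
    intro k; unfold cfDigit; rw [horb k]
  have hsum : ∀ k, cfSum (k+2) x = a + cfSum (k+1) y := by
    intro k
    unfold cfSum
    rw [Finset.sum_range_succ']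
    simp only [hdsucc, hd0]
    rw [add_comm]
  have hterm : ∀ k, term x (k+1) = -(2:ℝ) ^ (-(a:ℤ)) * term y k := by
    intro k
    unfold term
    rw [horb k]
    split
    · ring
    · rw [hsum k]
      rw [show ((1:ℤ) - ((a + cfSum (k+1) y : ℕ):ℤ)) = (-(a:ℤ)) + ((1:ℤ) - (cfSum (k+1) y:ℤ)) by
        push_cast; ring]
      rw [zpow_add₀ (two_ne_zero), pow_succ]
      ring
  have hx01 : x ∈ Icc (0:ℝ) 1 := inv_nat_add_mem ha hy
  have hsumm : Summable (term x) := summable_term hx01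
  rw [mink_eq_tsum, Summable.tsum_eq_zero_add hsumm]
  have ht0 : term x 0 = 2 ^ ((1:ℤ) - (a:ℤ)) := by
    unfold term
    rw [if_neg (by simpa using hxne)]
    simp only [pow_zero, one_mul]
    congr 1
    have : cfSum 1 x = a := by simp [cfSum, hd0]
    rw [this]
  rw [ht0]
  have : ∑' k, term x (k+1) = ∑' k, (-(2:ℝ) ^ (-(a:ℤ)) * term y k) := by
    congr 1; ext k; exact hterm k
  rw [this, tsum_mul_left, mink_eq_tsum]
  ring

lemma mink_mem_Icc {x : ℝ} (hx : x ∈ Icc (0:ℝ) 1) : mink x ∈ Icc (0:ℝ) 1 := by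
  have hs := summable_term hx
  have hg := summable_gterm hx
  have hse : Summable (fun k => gterm x (2*k)) := hg.comp_injective (fun m n => by omega)
  have hso : Summable (fun k => gterm x (2*k+1)) := hg.comp_injective (fun m n => by omega)
  have hso2 : Summable (fun k => gterm x (2*k+2)) := hg.comp_injective (fun m n => by omega)
  have hte : (fun k => term x (2*k)) = (fun k => gterm x (2*k)) := by
    ext k; rw [term_eq, pow_mul]; norm_num
  have hto : (fun k => term x (2*k+1)) = (fun k => -gterm x (2*k+1)) := by
    ext k; rw [term_eq, pow_succ, pow_mul]; norm_num
  have key : mink x = (∑' k, gterm x (2*k)) - ∑' k, gterm x (2*k+1) := by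
    rw [mink_eq_tsum, ← tsum_even_add_odd (by rw [hte]; exact hse) (by rw [hto]; exact hso.neg),
      hte, hto, tsum_neg]
    ring
  have hle : ∀ k, gterm x (2*k+1) ≤ gterm x (2*k) := by
    intro k
    calc gterm x (2*k+1) ≤ gterm x (2*k) / 2 := gterm_succ_le _
      _ ≤ gterm x (2*k) := by linarith [gterm_nonneg x (2*k)]
  constructor
  · rw [key, sub_nonneg]
    exact Summable.tsum_le_tsum hle hso hse
  · -- upper bound
    have key2 : mink x = gterm x 0 - ((∑' k, gterm x (2*k+1)) - ∑' k, gterm x (2*k+2)) := by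
      rw [mink_eq_tsum, Summable.tsum_eq_zero_add hs]
      have h1 : term x 0 = gterm x 0 := by rw [term_eq]; norm_num
      have he : (fun k => term x (2*k+1)) = fun k => -gterm x (2*k+1) := hto
      have ho : (fun k => term x (2*k+1+1)) = fun k => gterm x (2*k+2) := by
        ext k
        rw [term_eq]
        have : (-1:ℝ)^(2*k+1+1) = 1 := by rw [show 2*k+1+1 = 2*(k+1) by ring, pow_mul]; norm_num
        rw [this, one_mul]
      have := tsum_even_add_odd (f := fun k => term x (k+1))
        (by rw [show (fun k => term x (2*k+1)) = _ from rfl, he]; exact hso.neg)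
        (by
          have : (fun k => term x (2*(k)+1+1)) = fun k => gterm x (2*k+2) := ho
          rw [show (fun k => term x (2*k+1+1)) = _ from rfl] at this
          rw [this]; exact hso2)
      rw [← this, he, ho, h1, tsum_neg]
      ring
    have hle2 : ∀ k, gterm x (2*k+2) ≤ gterm x (2*k+1) := by
      intro k
      calc gterm x (2*k+2) ≤ gterm x (2*k+1) / 2 := gterm_succ_le _
        _ ≤ gterm x (2*k+1) := by linarith [gterm_nonneg x (2*k+1)]
    have : 0 ≤ (∑' k, gterm x (2*k+1)) - ∑' k, gterm x (2*k+2) := by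
      rw [sub_nonneg]; exact Summable.tsum_le_tsum hle2 hso2 hso
    have h0 : gterm x 0 ≤ 1 := gterm_zero_le_one hx
    rw [key2]; linarith

/-! Surjectivity machinery -/

lemma two_zpow_neg (a : ℕ) : (2:ℝ) ^ (-(a:ℤ)) = (1/2:ℝ)^a := by
  rw [zpow_neg, zpow_natCast]
  simp [inv_pow]

lemma two_zpow_one_sub (a : ℕ) : (2:ℝ) ^ ((1:ℤ) - (a:ℤ)) = 2 * (1/2:ℝ)^a := by
  rw [sub_eq_add_neg, zpow_add₀ (two_ne_zero), two_zpow_neg]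
  norm_num

lemma half_pow_mul_two_pow (a : ℕ) : (1/2:ℝ)^a * 2^a = 1 := by
  rw [← mul_pow]; norm_num

open Classical in
noncomputable def dig (u : ℝ) : ℕ :=
  if h : ∃ a : ℕ, 1 ≤ a ∧ (1/2:ℝ)^a ≤ u then Nat.find h else 1

lemma dig_exists {u : ℝ} (h0 : 0 < u) : ∃ a : ℕ, 1 ≤ a ∧ (1/2:ℝ)^a ≤ u := by
  obtain ⟨n, hn⟩ := exists_pow_lt_of_lt_one h0 (by norm_num : (1/2:ℝ) < 1)
  refine ⟨max n 1, le_max_right _ _, le_trans ?_ hn.le⟩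
  exact pow_le_pow_of_le_one (by norm_num) (by norm_num) (le_max_left _ _)

lemma dig_one_le {u : ℝ} (h0 : 0 < u) : 1 ≤ dig u := by
  unfold dig
  rw [dif_pos (dig_exists h0)]
  exact (Nat.find_spec (dig_exists h0)).1

lemma dig_le_self {u : ℝ} (h0 : 0 < u) : (1/2:ℝ)^(dig u) ≤ u := by
  unfold dig
  rw [dif_pos (dig_exists h0)]
  exact (Nat.find_spec (dig_exists h0)).2

lemma dig_min {u : ℝ} (h0 : 0 < u) {a : ℕ} (ha : 1 ≤ a) (hle : (1/2:ℝ)^a ≤ u) : dig u ≤ a := by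
  unfold dig
  rw [dif_pos (dig_exists h0)]
  exact Nat.find_le ⟨ha, hle⟩

lemma dig_lt {u : ℝ} (h0 : 0 < u) {a : ℕ} (ha : 1 ≤ a) (h : a < dig u) : u < (1/2:ℝ)^a := by
  by_contra hle
  push_neg at hle
  exact absurd (dig_min h0 ha hle) (by omega)

lemma dig_upper {u : ℝ} (h0 : 0 < u) (h1 : u ≤ 1) : u ≤ 2 * (1/2:ℝ)^(dig u) := by
  rcases Nat.lt_or_ge (dig u) 2 with h | h
  · have h1' : dig u = 1 := le_antisymm (by omega) (dig_one_le h0)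
    rw [h1']; norm_num; linarith
  · have hlt := dig_lt h0 (a := dig u - 1) (by omega) (by omega)
    have heq : (1/2:ℝ)^(dig u - 1) = 2 * (1/2:ℝ)^(dig u) := by
      have hh : dig u = (dig u - 1) + 1 := by omega
      rw [hh, pow_succ]
      have : dig u - 1 + 1 - 1 = dig u - 1 := by omega
      rw [this]
      ring
    linarith

/-- one step of the binary-expansion descent -/
noncomputable def nxt (u : ℝ) : ℝ := 2 - 2^(dig u) * u

lemma F_nxt {u : ℝ} : 2 * (1/2:ℝ)^(dig u) - (1/2:ℝ)^(dig u) * nxt u = u := by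
  unfold nxt
  have h := half_pow_mul_two_pow (dig u)
  linear_combination u * h

/-- dyadic rationals -/
def Dy (u : ℝ) : Prop := ∃ (m : ℤ) (s : ℕ), u = (m : ℝ) / 2^s

lemma Dy_zero : Dy 0 := ⟨0, 0, by norm_num⟩
lemma Dy_one : Dy 1 := ⟨1, 0, by norm_num⟩
lemma Dy_pow (a : ℕ) : Dy ((1/2:ℝ)^a) := ⟨1, a, by rw [div_pow]; norm_num⟩
lemma Dy_two_pow (a : ℕ) : Dy (2 * (1/2:ℝ)^a) := ⟨2, a, by rw [div_pow]; push_cast; ring⟩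

lemma Dy_of_nxt {u : ℝ} (h : Dy (nxt u)) : Dy u := by
  obtain ⟨m, s, hms⟩ := h
  refine ⟨2^(s+1) - m, s + dig u, ?_⟩
  have hs : (2:ℝ)^s ≠ 0 := by positivity
  have h2 : (2:ℝ)^(dig u) * u * 2^s = 2 * 2^s - m := by
    unfold nxt at hms
    field_simp at hms
    linarith
  push_cast
  rw [pow_add, eq_div_iff (by positivity)]
  push_cast
  linear_combination h2

lemma nxt_mem {u : ℝ} (h0 : 0 < u) (h1 : u < 1) (hnd : ¬ Dy u) : nxt u ∈ Ioo (0:ℝ) 1 := by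
  have hd := dig_le_self h0
  have hu := dig_upper h0 h1.le
  have hp := half_pow_mul_two_pow (dig u)
  have hppos : (0:ℝ) < (1/2:ℝ)^(dig u) := by positivity
  have h2pos : (0:ℝ) < (2:ℝ)^(dig u) := by positivity
  constructor
  · -- 0 < nxt u : u < 2*(1/2)^d  strictly since u not dyadic
    have hlt : u < 2 * (1/2:ℝ)^(dig u) := lt_of_le_of_ne hu (fun he => hnd (he ▸ Dy_two_pow _))
    unfold nxt
    nlinarith
  · have hlt : (1/2:ℝ)^(dig u) < u := lt_of_le_of_ne hd (fun he => hnd (he ▸ Dy_pow _))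
    unfold nxt
    nlinarith

lemma nxt_not_Dy {u : ℝ} (hnd : ¬ Dy u) : ¬ Dy (nxt u) := fun h => hnd (Dy_of_nxt h)

noncomputable def Tseq (t : ℝ) : ℕ → ℝ
  | 0 => t
  | (n+1) => nxt (Tseq t n)

lemma Tseq_mem {t : ℝ} (h : t ∈ Ioo (0:ℝ) 1) (hnd : ¬ Dy t) (n : ℕ) :
    Tseq t n ∈ Ioo (0:ℝ) 1 ∧ ¬ Dy (Tseq t n) := by
  induction n with
  | zero => exact ⟨h, hnd⟩
  | succ n ih => exact ⟨nxt_mem ih.1.1 ih.1.2 ih.2, nxt_not_Dy ih.2⟩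

noncomputable def compseq (A : ℕ → ℕ) : ℕ → ℝ → ℝ
  | 0 => id
  | (n+1) => compseq A n ∘ fun y => ((A n : ℝ) + y)⁻¹

noncomputable def Fcseq (A : ℕ → ℕ) : ℕ → ℝ → ℝ
  | 0 => id
  | (n+1) => Fcseq A n ∘ fun u => 2 ^ ((1:ℤ) - (A n:ℤ)) - 2 ^ (-(A n:ℤ)) * u

lemma compseq_mem {A : ℕ → ℕ} (hA : ∀ k, 1 ≤ A k) (n : ℕ) {y : ℝ} (hy : y ∈ Icc (0:ℝ) 1) :
    compseq A n y ∈ Icc (0:ℝ) 1 := by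
  induction n generalizing y with
  | zero => exact hy
  | succ n ih => exact ih (inv_nat_add_mem (hA n) hy)

lemma mink_compseq {A : ℕ → ℕ} (hA : ∀ k, 1 ≤ A k) (n : ℕ) {y : ℝ} (hy : y ∈ Icc (0:ℝ) 1) :
    mink (compseq A n y) = Fcseq A n (mink y) := by
  induction n generalizing y with
  | zero => rfl
  | succ n ih =>
    show mink (compseq A n (((A n : ℝ) + y)⁻¹)) = Fcseq A n _
    rw [ih (inv_nat_add_mem (hA n) hy), mink_rec (hA n) hy]

lemma Fcseq_lip {A : ℕ → ℕ} (hA : ∀ k, 1 ≤ A k) (n : ℕ) (u v : ℝ) :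
    |Fcseq A n u - Fcseq A n v| ≤ (1/2:ℝ)^n * |u - v| := by
  induction n generalizing u v with
  | zero => simp [Fcseq]
  | succ n ih =>
    show |Fcseq A n _ - Fcseq A n _| ≤ _
    calc |Fcseq A n (2 ^ ((1:ℤ) - (A n:ℤ)) - 2 ^ (-(A n:ℤ)) * u) -
          Fcseq A n (2 ^ ((1:ℤ) - (A n:ℤ)) - 2 ^ (-(A n:ℤ)) * v)|
        ≤ (1/2:ℝ)^n * |(2 ^ ((1:ℤ) - (A n:ℤ)) - 2 ^ (-(A n:ℤ)) * u) -
            (2 ^ ((1:ℤ) - (A n:ℤ)) - 2 ^ (-(A n:ℤ)) * v)| := ih _ _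
      _ = (1/2:ℝ)^n * ((1/2:ℝ)^(A n) * |v - u|) := by
          rw [show (2 ^ ((1:ℤ) - (A n:ℤ)) - 2 ^ (-(A n:ℤ)) * u) -
            (2 ^ ((1:ℤ) - (A n:ℤ)) - 2 ^ (-(A n:ℤ)) * v) = 2 ^ (-(A n:ℤ)) * (v - u) by ring]
          rw [abs_mul, two_zpow_neg, abs_of_nonneg (by positivity : (0:ℝ) ≤ (1/2:ℝ)^(A n))]
      _ ≤ (1/2:ℝ)^n * ((1/2:ℝ)^1 * |v - u|) := by
          apply mul_le_mul_of_nonneg_left _ (by positivity)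
          apply mul_le_mul_of_nonneg_right _ (abs_nonneg _)
          exact pow_le_pow_of_le_one (by norm_num) (by norm_num) (hA n)
      _ = (1/2:ℝ)^(n+1) * |u - v| := by rw [abs_sub_comm]; ring

lemma Fcseq_Tseq {t : ℝ} (n : ℕ) :
    Fcseq (fun k => dig (Tseq t k)) n (Tseq t n) = t := by
  induction n with
  | zero => rfl
  | succ n ih =>
    show Fcseq _ n (2 ^ ((1:ℤ) - (dig (Tseq t n):ℤ)) - 2 ^ (-(dig (Tseq t n):ℤ)) * Tseq t (n+1)) = t
    rw [two_zpow_one_sub, two_zpow_neg]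
    show Fcseq _ n (2 * (1/2:ℝ)^(dig (Tseq t n)) - (1/2:ℝ)^(dig (Tseq t n)) * nxt (Tseq t n)) = t
    rw [F_nxt]
    exact ih

lemma compseq_contOn {A : ℕ → ℕ} (hA : ∀ k, 1 ≤ A k) (n : ℕ) :
    ContinuousOn (compseq A n) (Icc (0:ℝ) 1) := by
  induction n with
  | zero => exact continuousOn_id
  | succ n ih =>
    show ContinuousOn (compseq A n ∘ fun y => ((A n : ℝ) + y)⁻¹) _
    apply ContinuousOn.comp ih
    · apply ContinuousOn.inv₀
      · exact (continuous_const.add continuous_id).continuousOn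
      · intro y hy
        have : (1:ℝ) ≤ (A n : ℝ) + y := by
          have : (1:ℝ) ≤ (A n : ℝ) := by exact_mod_cast hA n
          linarith [hy.1]
        linarith
    · intro y hy
      exact inv_nat_add_mem (hA n) hy

lemma surj_nondyadic {t : ℝ} (ht : t ∈ Ioo (0:ℝ) 1) (hnd : ¬ Dy t) :
    ∃ x ∈ Icc (0:ℝ) 1, mink x = t := by
  set A : ℕ → ℕ := fun k => dig (Tseq t k) with hA
  have hA1 : ∀ k, 1 ≤ A k := fun k => dig_one_le (Tseq_mem ht hnd k).1.1
  set C : ℕ → Set ℝ := fun n => compseq A n '' Icc 0 1 with hC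
  have hCsub : ∀ n, C (n+1) ⊆ C n := by
    intro n
    rintro _ ⟨y, hy, rfl⟩
    exact ⟨_, inv_nat_add_mem (hA1 n) hy, rfl⟩
  have hCne : ∀ n, (C n).Nonempty := fun n => ⟨_, ⟨0, by norm_num, rfl⟩⟩
  have hCcomp : ∀ n, IsCompact (C n) :=
    fun n => isCompact_Icc.image_of_continuousOn (compseq_contOn hA1 n)
  obtain ⟨x, hx⟩ := IsCompact.nonempty_iInter_of_sequence_nonempty_isCompact_isClosed C
    hCsub hCne (hCcomp 0) (fun n => (hCcomp n).isClosed)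
  simp only [mem_iInter] at hx
  obtain ⟨y0, hy0, hxy0⟩ := hx 0
  have hx01 : x ∈ Icc (0:ℝ) 1 := by rw [← hxy0]; exact hy0
  refine ⟨x, hx01, ?_⟩
  have key : ∀ n, |mink x - t| ≤ (1/2:ℝ)^n := by
    intro n
    obtain ⟨y, hy, hxy⟩ := hx n
    have h1 : mink x = Fcseq A n (mink y) := by rw [← hxy, mink_compseq hA1 n hy]
    have h2 : t = Fcseq A n (Tseq t n) := (Fcseq_Tseq n).symm
    rw [h1]
    conv_lhs => rw [h2]
    calc |Fcseq A n (mink y) - Fcseq A n (Tseq t n)| ≤ (1/2:ℝ)^n * |mink y - Tseq t n| :=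
          Fcseq_lip hA1 n _ _
      _ ≤ (1/2:ℝ)^n * 1 := by
          apply mul_le_mul_of_nonneg_left _ (by positivity)
          have hm := mink_mem_Icc hy
          have hT := (Tseq_mem ht hnd n).1
          rw [abs_le]
          constructor <;> [linarith [hm.1, hT.2.le]; linarith [hm.2, hT.1.le]]
      _ = (1/2:ℝ)^n := mul_one _
  by_contra hne
  have habs : 0 < |mink x - t| := abs_pos.mpr (sub_ne_zero.mpr hne)
  obtain ⟨n, hn⟩ := exists_pow_lt_of_lt_one habs (by norm_num : (1/2:ℝ) < 1)
  exact absurd (key n) (not_le.mpr hn)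

lemma surj_dyadic : ∀ s : ℕ, ∀ m : ℕ, m ≤ 2^s → ∃ x ∈ Icc (0:ℝ) 1, mink x = (m:ℝ) / 2^s := by
  intro s
  induction s using Nat.strong_induction_on with
  | _ s ih =>
    intro m hm
    rcases Nat.eq_zero_or_pos m with rfl | hm0
    · exact ⟨0, ⟨le_refl 0, zero_le_one⟩, by rw [mink_zero]; norm_num⟩
    rcases eq_or_lt_of_le hm with rfl | hmlt
    · refine ⟨1, ⟨zero_le_one, le_refl 1⟩, ?_⟩
      rw [mink_one]
      push_cast
      rw [div_self (by positivity)]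
    -- 0 < m < 2^s
    have hs1 : 1 ≤ s := by
      by_contra h
      interval_cases s <;> omega
    set t : ℝ := (m:ℝ) / 2^s with htdef
    have ht0 : 0 < t := by positivity
    have ht1 : t < 1 := by
      rw [htdef, div_lt_one (by positivity)]
      exact_mod_cast hmlt
    set a : ℕ := dig t with hadef
    have ha1 : 1 ≤ a := dig_one_le ht0
    have hle : (1/2:ℝ)^a ≤ t := dig_le_self ht0
    have hup : t ≤ 2 * (1/2:ℝ)^a := dig_upper ht0 ht1.le
    have has : a ≤ s := by
      apply dig_min ht0 hs1
      rw [htdef]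
      rw [div_pow, one_pow, div_le_div_iff₀ (by positivity) (by positivity)]
      have : (1:ℝ) ≤ (m:ℝ) := by exact_mod_cast hm0
      nlinarith [pow_pos (by norm_num : (0:ℝ) < 2) s]
    set j : ℕ := s - a with hjdef
    have hsj : s = j + a := by omega
    have hja : (2:ℝ)^s = 2^j * 2^a := by rw [hsj, pow_add]
    have hpa : (1/2:ℝ)^a * 2^a = 1 := half_pow_mul_two_pow a
    have h2j : (0:ℝ) < 2^j := by positivity
    have h2a : (0:ℝ) < (2:ℝ)^a := by positivity
    -- m ≤ 2^(j+1)
    have hm2 : m ≤ 2^(j+1) := by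
      have hr : (m:ℝ) ≤ 2^(j+1) := by
        have : (m:ℝ) ≤ 2 * (1/2:ℝ)^a * 2^s := by
          rw [htdef] at hup
          rw [div_le_iff₀ (by positivity)] at hup
          linarith
        rw [hja] at this
        calc (m:ℝ) ≤ 2 * (1/2:ℝ)^a * (2^j * 2^a) := this
          _ = 2 * 2^j * ((1/2:ℝ)^a * 2^a) := by ring
          _ = 2^(j+1) := by rw [hpa, pow_succ]; ring
      exact_mod_cast hr
    -- 2^j ≤ m
    have hjm : 2^j ≤ m := by
      have hr : (2:ℝ)^j ≤ (m:ℝ) := by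
        have : (1/2:ℝ)^a * 2^s ≤ (m:ℝ) := by
          rw [htdef] at hle
          rw [le_div_iff₀ (by positivity)] at hle
          linarith
        rw [hja] at this
        calc (2:ℝ)^j = 2^j * ((1/2:ℝ)^a * 2^a) := by rw [hpa]; ring
          _ = (1/2:ℝ)^a * (2^j * 2^a) := by ring
          _ ≤ (m:ℝ) := this
      exact_mod_cast hr
    set m'' : ℕ := 2^(j+1) - m with hm''def
    have hm''le : m'' ≤ 2^j := by
      have : 2^(j+1) = 2^j + 2^j := by rw [pow_succ]; ring
      omega
    obtain ⟨y, hy, hminky⟩ := ih j (by omega) m'' hm''le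
    refine ⟨((a:ℝ) + y)⁻¹, inv_nat_add_mem ha1 hy, ?_⟩
    rw [mink_rec ha1 hy, hminky, two_zpow_one_sub, two_zpow_neg]
    have hm''cast : (m'':ℝ) = 2^(j+1) - (m:ℝ) := by
      rw [hm''def]
      push_cast [Nat.cast_sub hm2]
      ring
    rw [hm''cast, htdef, hja]
    have h2jne : (2:ℝ)^j ≠ 0 := ne_of_gt h2j
    have hfrac : ((2:ℝ)^(j+1) - m)/2^j = 2 - (m:ℝ)/2^j := by
      field_simp
      rw [pow_succ]
    rw [hfrac]
    have hstep : 2*(1/2:ℝ)^a - (1/2:ℝ)^a*(2 - (m:ℝ)/2^j) = (m:ℝ) * (1/2:ℝ)^a / 2^j := by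
      ring
    rw [hstep, div_eq_div_iff (by positivity) (by positivity)]
    linear_combination ((m:ℝ) * 2^j) * hpa

lemma mink_image_unit : mink '' Icc (0:ℝ) 1 = Icc (0:ℝ) 1 := by
  apply Subset.antisymm
  · rintro _ ⟨x, hx, rfl⟩
    exact mink_mem_Icc hx
  · rintro t ht
    by_cases hd : Dy t
    · obtain ⟨mz, s, rfl⟩ := hd
      have h2s : (0:ℝ) < 2^s := by positivity
      have hmz0 : 0 ≤ mz := by
        by_contra h
        push_neg at h
        have : ((mz:ℝ)) < 0 := by exact_mod_cast h
        have h2 := ht.1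
        rw [le_div_iff₀ h2s] at h2
        nlinarith
      have hmzle : mz ≤ 2^s := by
        have := ht.2
        rw [div_le_one h2s] at this
        exact_mod_cast this
      obtain ⟨x, hx, hm⟩ := surj_dyadic s mz.toNat (by
        have : (mz.toNat : ℤ) ≤ ((2^s : ℕ) : ℤ) := by push_cast; omega
        exact_mod_cast this)
      refine ⟨x, hx, ?_⟩
      rw [hm]
      congr 1
      have : (mz.toNat : ℤ) = mz := Int.toNat_of_nonneg hmz0
      exact_mod_cast congrArg (Int.cast : ℤ → ℝ) this
    · have ht0 : t ≠ 0 := fun h => hd (h ▸ Dy_zero)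
      have ht1 : t ≠ 1 := fun h => hd (h ▸ Dy_one)
      obtain ⟨x, hx, hm⟩ := surj_nondyadic
        ⟨lt_of_le_of_ne ht.1 (Ne.symm ht0), lt_of_le_of_ne ht.2 ht1⟩ hd
      exact ⟨x, hx, hm⟩

/-! Cylinder structure -/

lemma cyl_subset_Icc {a : ℕ} (ha : 1 ≤ a) {n : ℕ} (hn : 1 ≤ n) (b : Fin n → ℕ)
    (hb0 : b ⟨0, hn⟩ = a) :
    {x : ℝ | x ∈ Ioo (0:ℝ) 1 ∧ ∀ i : Fin n, cfDigit i x = b i} ⊆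
      Icc (((a:ℝ)+1)⁻¹) ((a:ℝ)⁻¹) := by
  rintro x ⟨hx, hdig⟩
  have hxpos : 0 < x := hx.1
  have hd : cfDigit 0 x = a := by
    have := hdig ⟨0, hn⟩
    simpa [hb0] using this
  have hfloor : ⌊x⁻¹⌋₊ = a := by
    unfold cfDigit at hd
    simpa using hd
  have hxinv0 : (0:ℝ) ≤ x⁻¹ := by positivity
  have hge : (a:ℝ) ≤ x⁻¹ := by
    rw [← hfloor]; exact Nat.floor_le hxinv0
  have hlt : x⁻¹ < (a:ℝ) + 1 := by
    rw [← hfloor]; exact_mod_cast Nat.lt_floor_add_one x⁻¹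
  have hapos : (0:ℝ) < a := by exact_mod_cast ha
  constructor
  · rw [inv_le_comm₀ (by positivity) hxpos]
    exact hlt.le
  · rw [le_inv_comm₀ hapos hxpos] at hge
    exact hge

lemma Ioo_subset_cyl1 {a : ℕ} (ha : 1 ≤ a) (b : Fin 1 → ℕ) (hb0 : b 0 = a) :
    Ioo (((a:ℝ)+1)⁻¹) ((a:ℝ)⁻¹) ⊆
      {x : ℝ | x ∈ Ioo (0:ℝ) 1 ∧ ∀ i : Fin 1, cfDigit i x = b i} := by
  rintro x ⟨h1, h2⟩
  have hapos : (0:ℝ) < a := by exact_mod_cast ha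
  have hxpos : 0 < x := lt_trans (by positivity) h1
  have hainv : (a:ℝ)⁻¹ ≤ 1 := by
    rw [inv_le_one_iff₀]; right; exact_mod_cast ha
  have hx1 : x < 1 := lt_of_lt_of_le h2 hainv
  have hge : (a:ℝ) < x⁻¹ := by rwa [lt_inv_comm₀ hapos hxpos]
  have hlt : x⁻¹ < (a:ℝ) + 1 := by rwa [inv_lt_comm₀ hxpos (by positivity)]
  refine ⟨⟨hxpos, hx1⟩, ?_⟩
  intro i
  have hi : i = 0 := Subsingleton.elim i 0
  rw [hi, hb0]
  show ⌊(gaussMap^[(0:Fin 1)] x)⁻¹⌋₊ = a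
  simp only [Fin.val_zero, Function.iterate_zero, id_eq]
  rw [Nat.floor_eq_iff (by positivity)]
  exact ⟨hge.le, by push_cast; linarith⟩

lemma closure_cyl1 {a : ℕ} (ha : 1 ≤ a) (b : Fin 1 → ℕ) (hb0 : b 0 = a) :
    closure {x : ℝ | x ∈ Ioo (0:ℝ) 1 ∧ ∀ i : Fin 1, cfDigit i x = b i} =
      Icc (((a:ℝ)+1)⁻¹) ((a:ℝ)⁻¹) := by
  have hapos : (0:ℝ) < a := by exact_mod_cast ha
  have hlt : ((a:ℝ)+1)⁻¹ < (a:ℝ)⁻¹ := by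
    apply inv_strictAnti₀ hapos
    linarith
  apply Subset.antisymm
  · exact closure_minimal (cyl_subset_Icc ha (le_refl 1) b hb0) isClosed_Icc
  · have h1 : Icc (((a:ℝ)+1)⁻¹) ((a:ℝ)⁻¹) = closure (Ioo (((a:ℝ)+1)⁻¹) ((a:ℝ)⁻¹)) :=
      (closure_Ioo (ne_of_lt hlt)).symm
    rw [h1]
    exact closure_mono (Ioo_subset_cyl1 ha b hb0)

lemma gaussMap_inv_nat_add {a0 : ℕ} {y : ℝ} (h0 : 0 ≤ y) (h1 : y < 1) (hpos : (0:ℝ) < (a0:ℝ) + y) :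
    gaussMap (((a0:ℝ) + y)⁻¹) = y := by
  unfold gaussMap
  rw [if_neg (by positivity), inv_inv]
  have : (a0:ℝ) = ((a0:ℤ):ℝ) := by push_cast; ring
  rw [this, add_comm, Int.fract_add_intCast, Int.fract_eq_self.mpr ⟨h0, h1⟩]

lemma cfDigit_zero_inv_nat_add {a0 : ℕ} (ha0 : 1 ≤ a0) {y : ℝ} (h0 : 0 ≤ y) (h1 : y < 1) :
    cfDigit 0 (((a0:ℝ) + y)⁻¹) = a0 := by
  have hpos : (0:ℝ) < (a0:ℝ) + y := by
    have : (1:ℝ) ≤ (a0:ℝ) := by exact_mod_cast ha0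
    linarith
  unfold cfDigit
  simp only [Function.iterate_zero, id_eq]
  rw [inv_inv, Nat.floor_eq_iff (by positivity)]
  exact ⟨by linarith, by push_cast; linarith⟩

lemma cyl_succ {n : ℕ} (hn : 1 ≤ n) (a : Fin (n+1) → ℕ) (ha : ∀ i, 1 ≤ a i) :
    {x : ℝ | x ∈ Ioo (0:ℝ) 1 ∧ ∀ i : Fin (n+1), cfDigit i x = a i} =
      (fun y => ((a 0 : ℝ) + y)⁻¹) ''
        {y : ℝ | y ∈ Ioo (0:ℝ) 1 ∧ ∀ i : Fin n, cfDigit i y = a i.succ} := by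
  have ha0 : 1 ≤ a 0 := ha 0
  have ha0R : (1:ℝ) ≤ (a 0 : ℝ) := by exact_mod_cast ha0
  ext x
  constructor
  · rintro ⟨hx, hdig⟩
    have hxpos : 0 < x := hx.1
    have hxne : x ≠ 0 := ne_of_gt hxpos
    have hd : cfDigit 0 x = a 0 := by simpa using hdig 0
    have hfloor : ⌊x⁻¹⌋₊ = a 0 := by unfold cfDigit at hd; simpa using hd
    have hxinv0 : (0:ℝ) ≤ x⁻¹ := by positivity
    have hge : (a 0 : ℝ) ≤ x⁻¹ := by rw [← hfloor]; exact Nat.floor_le hxinv0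
    have hlt : x⁻¹ < (a 0 : ℝ) + 1 := by
      rw [← hfloor]; exact_mod_cast Nat.lt_floor_add_one x⁻¹
    set y : ℝ := x⁻¹ - (a 0 : ℝ) with hydef
    have hy0 : 0 ≤ y := by rw [hydef]; linarith
    have hy1 : y < 1 := by rw [hydef]; linarith
    have hxinv : x⁻¹ = (a 0 : ℝ) + y := by rw [hydef]; ring
    have hgx : gaussMap x = y := by
      have : x = ((a 0 : ℝ) + y)⁻¹ := by rw [← hxinv, inv_inv]
      rw [this]
      exact gaussMap_inv_nat_add hy0 hy1 (by linarith)
    have hyne : y ≠ 0 := by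
      intro h0
      have hone : ((1 : Fin (n+1)) : ℕ) = 1 := by
        rw [Fin.val_one']
        rw [Nat.mod_eq_of_lt (by omega)]
      have hd1 : cfDigit 1 x = a 1 := by
        have := hdig 1
        rwa [hone] at this
      have hz : cfDigit 1 x = 0 := by
        unfold cfDigit
        rw [Function.iterate_one, hgx, h0]
        simp
      have h1a := ha 1
      omega
    refine ⟨y, ⟨⟨lt_of_le_of_ne hy0 (Ne.symm hyne), hy1⟩, ?_⟩, ?_⟩
    · intro i
      have : cfDigit (i : ℕ) y = cfDigit ((i : ℕ) + 1) x := by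
        unfold cfDigit
        rw [Function.iterate_succ_apply, hgx]
      rw [this]
      have := hdig i.succ
      rwa [Fin.val_succ] at this
    · show ((a 0 : ℝ) + y)⁻¹ = x
      rw [← hxinv, inv_inv]
  · rintro ⟨y, ⟨hy, hdig⟩, rfl⟩
    have hy0 : 0 < y := hy.1
    have hy1 : y < 1 := hy.2
    have hsum : (1:ℝ) < (a 0 : ℝ) + y := by linarith
    have hgx : gaussMap (((a 0 : ℝ) + y)⁻¹) = y :=
      gaussMap_inv_nat_add hy0.le hy1 (by linarith)
    refine ⟨⟨by positivity, ?_⟩, ?_⟩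
    · rw [inv_lt_one_iff₀]; right; exact hsum
    · intro i
      induction i using Fin.cases with
      | zero => simpa using cfDigit_zero_inv_nat_add ha0 hy0.le hy1
      | succ j =>
        have : cfDigit (j.succ : ℕ) (((a 0 : ℝ) + y)⁻¹) = cfDigit (j : ℕ) y := by
          rw [Fin.val_succ]
          unfold cfDigit
          rw [Function.iterate_succ_apply, hgx]
        rw [this]
        exact hdig j

lemma contOn_g {a0 : ℕ} (ha0 : 1 ≤ a0) : ContinuousOn (fun y : ℝ => ((a0:ℝ)+y)⁻¹) (Icc 0 1) := by
  apply ContinuousOn.inv₀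
  · exact (continuous_const.add continuous_id).continuousOn
  · intro y hy
    have : (1:ℝ) ≤ (a0 : ℝ) := by exact_mod_cast ha0
    have := hy.1
    intro h
    linarith [h ▸ (by linarith : (1:ℝ) ≤ (a0:ℝ) + y)]

lemma closure_image_inv {a0 : ℕ} (ha0 : 1 ≤ a0) {S : Set ℝ} (hS : S ⊆ Icc (0:ℝ) 1) :
    closure ((fun y : ℝ => ((a0:ℝ)+y)⁻¹) '' S) = (fun y : ℝ => ((a0:ℝ)+y)⁻¹) '' closure S := by
  have hsub : closure S ⊆ Icc (0:ℝ) 1 := closure_minimal hS isClosed_Icc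
  have hcomp : IsCompact (closure S) :=
    IsCompact.of_isClosed_subset isCompact_Icc isClosed_closure hsub
  exact (image_closure_of_isCompact hcomp ((contOn_g ha0).mono hsub)).symm

lemma Icc_eq_image_g {a0 : ℕ} (ha0 : 1 ≤ a0) :
    Icc (((a0:ℝ)+1)⁻¹) ((a0:ℝ)⁻¹) = (fun y : ℝ => ((a0:ℝ)+y)⁻¹) '' Icc 0 1 := by
  have haR : (1:ℝ) ≤ (a0:ℝ) := by exact_mod_cast ha0
  ext x
  constructor
  · rintro ⟨h1, h2⟩
    have hxpos : 0 < x := lt_of_lt_of_le (by positivity) h1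
    have hxinvle : x⁻¹ ≤ (a0:ℝ) + 1 := by
      rw [inv_le_comm₀ hxpos (by positivity)] at *
      exact h1
    have hxinvge : (a0:ℝ) ≤ x⁻¹ := by
      rw [le_inv_comm₀ (by linarith) hxpos] at *
      exact h2
    refine ⟨x⁻¹ - a0, ⟨by linarith, by linarith⟩, ?_⟩
    show ((a0:ℝ) + (x⁻¹ - a0))⁻¹ = x
    rw [show (a0:ℝ) + (x⁻¹ - a0) = x⁻¹ by ring, inv_inv]
  · rintro ⟨y, hy, rfl⟩
    have h1 : (1:ℝ) ≤ (a0:ℝ) + y := by linarith [hy.1]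
    constructor
    · apply inv_anti₀ (by linarith)
      linarith [hy.2]
    · show ((a0:ℝ) + y)⁻¹ ≤ (a0:ℝ)⁻¹
      apply inv_anti₀ (by linarith)
      linarith [hy.1]

lemma mink_image_g {a0 : ℕ} (ha0 : 1 ≤ a0) {C : Set ℝ} (hC : C ⊆ Icc (0:ℝ) 1) :
    mink '' ((fun y : ℝ => ((a0:ℝ)+y)⁻¹) '' C) =
      (fun t : ℝ => 2^((1:ℤ)-(a0:ℤ)) - 2^(-(a0:ℤ))*t) '' (mink '' C) := by
  rw [← image_comp, ← image_comp]
  apply image_congr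
  intro y hy
  exact mink_rec ha0 (hC hy)

lemma image_affine_neg {c k u v : ℝ} (hk : 0 < k) (huv : u ≤ v) :
    (fun t : ℝ => c - k*t) '' Icc u v = Icc (c - k*v) (c - k*u) := by
  ext z
  constructor
  · rintro ⟨t, ⟨h1, h2⟩, rfl⟩
    simp only
    constructor <;> nlinarith
  · rintro ⟨h1, h2⟩
    refine ⟨(c - z)/k, ⟨?_, ?_⟩, ?_⟩
    · rw [le_div_iff₀ hk]; nlinarith
    · rw [div_le_iff₀ hk]; nlinarith
    · field_simp; ring

lemma main_aux : ∀ (k : ℕ) (a : Fin (k+1) → ℕ), (∀ i, 1 ≤ a i) →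
    ∃ m : ℕ, m + 1 ≤ 2^(∑ i, a i) ∧
      mink '' closure {x : ℝ | x ∈ Ioo (0:ℝ) 1 ∧ ∀ i : Fin (k+1), cfDigit i x = a i} =
        Icc ((m : ℝ) / 2 ^ (∑ i, a i)) (((m : ℝ) + 1) / 2 ^ (∑ i, a i)) := by
  intro k
  induction k with
  | zero =>
    intro a ha
    have ha0 : 1 ≤ a 0 := ha 0
    have hsum : (∑ i, a i) = a 0 := by simp [Fin.sum_univ_one]
    refine ⟨1, ?_, ?_⟩
    · rw [hsum]
      calc 1 + 1 = 2^1 := by norm_num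
        _ ≤ 2^(a 0) := Nat.pow_le_pow_right (by norm_num) ha0
    · rw [closure_cyl1 ha0 a rfl, Icc_eq_image_g ha0, mink_image_g ha0 (le_refl _),
        mink_image_unit, hsum]
      have h01 : (0:ℝ) ≤ 1 := zero_le_one
      rw [two_zpow_one_sub, two_zpow_neg]
      rw [show (fun t:ℝ => 2*(1/2:ℝ)^(a 0) - (1/2:ℝ)^(a 0)*t) '' Icc 0 1 = _ from
        image_affine_neg (by positivity) h01]
      have hp : ((1:ℝ)/2)^(a 0) = 1/2^(a 0) := by rw [div_pow]; norm_num
      have e1 : 2*(1/2:ℝ)^(a 0) - (1/2:ℝ)^(a 0)*1 = ((1:ℕ):ℝ)/2^(a 0) := by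
        rw [hp]; push_cast; ring
      have e2 : 2*(1/2:ℝ)^(a 0) - (1/2:ℝ)^(a 0)*0 = (((1:ℕ):ℝ)+1)/2^(a 0) := by
        rw [hp]; push_cast; ring
      rw [e1, e2]
  | succ k ih =>
    intro a ha
    set tail : Fin (k+1) → ℕ := fun i => a i.succ with htail
    have htail1 : ∀ i, 1 ≤ tail i := fun i => ha i.succ
    obtain ⟨m, hmle, himg⟩ := ih tail htail1
    set s : ℕ := ∑ i, tail i with hs
    have ha0 : 1 ≤ a 0 := ha 0
    have hSsub : {y : ℝ | y ∈ Ioo (0:ℝ) 1 ∧ ∀ i : Fin (k+1), cfDigit i y = tail i} ⊆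
        Icc (0:ℝ) 1 := fun y hy => Ioo_subset_Icc_self hy.1
    have hstep := cyl_succ (by omega) a ha
    have hsum : (∑ i, a i) = a 0 + s := by
      rw [hs, htail, Fin.sum_univ_succ]
    refine ⟨2^(s+1) - (m+1), ?_, ?_⟩
    · have h1 : 2^(s+1) ≤ 2^(a 0 + s) := Nat.pow_le_pow_right (by norm_num) (by omega)
      have h2 : 1 ≤ 2^(s+1) := Nat.one_le_two_pow
      rw [hsum]
      omega
    · rw [hstep, closure_image_inv ha0 hSsub, mink_image_g ha0
        (closure_minimal hSsub isClosed_Icc), himg]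
      rw [two_zpow_one_sub, two_zpow_neg]
      have hple : (m:ℝ)/2^s ≤ ((m:ℝ)+1)/2^s := by
        apply div_le_div_of_nonneg_right _ (by positivity)
        · linarith
      rw [show (fun t:ℝ => 2*(1/2:ℝ)^(a 0) - (1/2:ℝ)^(a 0)*t) '' Icc ((m:ℝ)/2^s) (((m:ℝ)+1)/2^s)
          = _ from image_affine_neg (by positivity) hple]
      have hp : ((1:ℝ)/2)^(a 0) * 2^(a 0) = 1 := half_pow_mul_two_pow (a 0)
      have hcast : ((2^(s+1) - (m+1) : ℕ) : ℝ) = 2^(s+1) - ((m:ℝ)+1) := by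
        have hle : m + 1 ≤ 2^(s+1) := by
          have : 2^s ≤ 2^(s+1) := Nat.pow_le_pow_right (by norm_num) (by omega)
          omega
        push_cast [Nat.cast_sub hle]
        ring
      have h2s : (0:ℝ) < 2^s := by positivity
      have h2a : (0:ℝ) < (2:ℝ)^(a 0) := by positivity
      have hpow : (2:ℝ)^(a 0 + s) = 2^(a 0) * 2^s := by rw [pow_add]
      rw [hsum]
      have e1 : 2*(1/2:ℝ)^(a 0) - (1/2:ℝ)^(a 0)*(((m:ℝ)+1)/2^s)
          = ((2^(s+1) - (m+1) : ℕ) : ℝ)/2^(a 0 + s) := by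
        rw [hcast, hpow]
        rw [show 2*(1/2:ℝ)^(a 0) - (1/2:ℝ)^(a 0)*(((m:ℝ)+1)/2^s)
            = (2*(1/2:ℝ)^(a 0)*2^s - (1/2:ℝ)^(a 0)*((m:ℝ)+1))/2^s by field_simp]
        rw [div_eq_div_iff (ne_of_gt h2s) (ne_of_gt (by positivity))]
        linear_combination ((2*(2:ℝ)^s - ((m:ℝ)+1)) * (2:ℝ)^s) * hp
      have e2 : 2*(1/2:ℝ)^(a 0) - (1/2:ℝ)^(a 0)*((m:ℝ)/2^s)
          = (((2^(s+1) - (m+1) : ℕ) : ℝ)+1)/2^(a 0 + s) := by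
        rw [hcast, hpow]
        rw [show 2*(1/2:ℝ)^(a 0) - (1/2:ℝ)^(a 0)*((m:ℝ)/2^s)
            = (2*(1/2:ℝ)^(a 0)*2^s - (1/2:ℝ)^(a 0)*(m:ℝ))/2^s by field_simp]
        rw [div_eq_div_iff (ne_of_gt h2s) (ne_of_gt (by positivity))]
        linear_combination ((2*(2:ℝ)^s - (m:ℝ)) * (2:ℝ)^s) * hp
      rw [e1, e2]

/-- The `?`-image of an `n`-th level continued fraction cylinder `[a_1,…,a_n]` is a dyadic
interval of length `2^{-(a_1+⋯+a_n)}`. -/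
theorem mink_image_cylinder (n : ℕ) (hn : 1 ≤ n) (a : Fin n → ℕ) (ha : ∀ i, 1 ≤ a i) :
    ∃ m : ℕ,
      mink '' closure {x : ℝ | x ∈ Ioo (0 : ℝ) 1 ∧ ∀ i : Fin n, cfDigit i x = a i} =
        Icc ((m : ℝ) / 2 ^ (∑ i, a i)) (((m : ℝ) + 1) / 2 ^ (∑ i, a i)) := by
  obtain ⟨k, rfl⟩ : ∃ k, n = k + 1 := ⟨n - 1, by omega⟩
  obtain ⟨m, _, himg⟩ := main_aux k a ha
  exact ⟨m, himg⟩
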